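/- Let α ∈ (0,1) and let 0 < κ < 1 − α. Then P(for every set X of exactly ⌊κ·n^α·ln n⌋ vertices of G(n, n^{−α}) there exists a vertex outside X having no neighbor in X) → 1 as n → ∞. -/

import Mathlib

open Filter FirstOrder

noncomputable section

/-! ### The binomial random graph `G(n,p)` -/

/-- The number of edges of a simple graph. -/
noncomputable def edgeCt {n : ℕ} (G : SimpleGraph (Fin n)) : ℕ := Nat.card G.edgeSet

open scoped Classical in
/-- `prob n p Q` is the probability that the binomial random graph `G(n,p)` (on vertex set
`Fin n`) has property `Q`: the sum over all graphs `G` with `Q G` of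
`p^{e(G)} (1-p)^{n(n-1)/2 - e(G)}`. -/
noncomputable def prob (n : ℕ) (p : ℝ) (Q : SimpleGraph (Fin n) → Prop) : ℝ :=
  ∑ G : SimpleGraph (Fin n),
    if Q G then p ^ edgeCt G * (1 - p) ^ (n * (n - 1) / 2 - edgeCt G) else 0

/-- `expec n p W` is the expectation of a real-valued function `W` of the binomial random
graph `G(n,p)`. -/
noncomputable def expec (n : ℕ) (p : ℝ) (W : SimpleGraph (Fin n) → ℝ) : ℝ :=
  ∑ G : SimpleGraph (Fin n),
    W G * (p ^ edgeCt G * (1 - p) ^ (n * (n - 1) / 2 - edgeCt G))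

/-! ### The graphs `W_a^γ` and `W_a^{γ,*}` -/

/-- `ωr r a = (r^a − 1)/(r−1)`, the number of vertices of the perfect `r`-ary tree of
depth `a − 1`. -/
def ωr (r a : ℕ) : ℕ := (r ^ a - 1) / (r - 1)

/-- The depth of the node with (0-based) breadth-first (heap) index `j` in the infinite
`r`-ary tree: the root has index 0, and the parent of node `j ≥ 1` is node `(j−1)/r`. -/
def heapDepth (r : ℕ) : ℕ → ℕ
  | 0 => 0
  | j + 1 => heapDepth r (j / r) + 1
  decreasing_by exact Nat.lt_succ_of_le (Nat.div_le_self _ _)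

/-- The vertex set of `W_a^γ`: the path `F₁` on `a` vertices (`Sum.inl`), together with,
for each of the `(4^a−1)/3` vertices `i` of the perfect 4-ary tree `F₂` (in breadth-first
order), the vertex `(i,0)` of `F₂` itself and the `γ` inner vertices `(i,1),…,(i,γ)` of the
path `P_{γ+2}` joining `i` to the vertex of `F₁` at the same distance from the root. -/
abbrev WVert (γ a : ℕ) := Fin a ⊕ (Fin (ωr 4 a) × Fin (γ + 1))

/-- Base (directed) adjacency relation generating `W_a^γ`: consecutive `F₁`-vertices;
the last inner path vertex `(i,γ)` is joined to the `F₁`-vertex at depth of `i`;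
consecutive vertices along each `P_{γ+2}`; and tree edges of the perfect 4-ary tree
(in heap indexing, `j` is the parent of `i ≥ 1` iff `j = (i−1)/4`). -/
def Wbase (γ a : ℕ) : WVert γ a → WVert γ a → Prop
  | Sum.inl u, Sum.inl v => (v : ℕ) = (u : ℕ) + 1
  | Sum.inl u, Sum.inr iv => (iv.2 : ℕ) = γ ∧ heapDepth 4 (iv.1 : ℕ) = (u : ℕ)
  | Sum.inr _, Sum.inl _ => False
  | Sum.inr iv, Sum.inr jw =>
      (iv.1 = jw.1 ∧ (jw.2 : ℕ) = (iv.2 : ℕ) + 1) ∨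
      ((iv.2 : ℕ) = 0 ∧ (jw.2 : ℕ) = 0 ∧ 1 ≤ (iv.1 : ℕ) ∧ (jw.1 : ℕ) = ((iv.1 : ℕ) - 1) / 4)

/-- The graph `W_a^γ`. -/
def WG (γ a : ℕ) : SimpleGraph (WVert γ a) := SimpleGraph.fromRel (Wbase γ a)

/-- The vertex set of `W_a^{γ,*}` (with `ω₁ = ωr r a`, `ω₂ = ωr r ω₁`), as five pieces:
the path `F₁` on `a` vertices; the tree `F₂` together with the inner vertices of the
paths `P_{γ+2}` joining `F₂` to `F₁` (pairs `(i,k)`, `k = 0` being the `F₂`-vertex itself);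
the `γ` inner vertices of the paths `P_{γ+2}` joining the `i`-th vertex of `F₂` (in
breadth-first order) to the `i`-th vertex of the path `F̃₁`; the path `F̃₁` on `ω₁`
vertices; and the tree `F̃₂` together with the inner vertices of the paths `P_{γ+2}`
joining `F̃₂` to `F̃₁`. -/
abbrev WSVert (γ r a : ℕ) :=
  Fin a ⊕ ((Fin (ωr r a) × Fin (γ + 1)) ⊕ ((Fin (ωr r a) × Fin γ) ⊕
    (Fin (ωr r a) ⊕ (Fin (ωr r (ωr r a)) × Fin (γ + 1)))))

/-- Base (directed) adjacency relation generating `W_a^{γ,*}`. -/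
def WSbase (γ r a : ℕ) : WSVert γ r a → WSVert γ r a → Prop
  | .inl u, .inl v => (v : ℕ) = (u : ℕ) + 1
  | .inl u, .inr (.inl iv) => (iv.2 : ℕ) = γ ∧ heapDepth r (iv.1 : ℕ) = (u : ℕ)
  | .inr (.inl iv), .inr (.inl jw) =>
      (iv.1 = jw.1 ∧ (jw.2 : ℕ) = (iv.2 : ℕ) + 1) ∨
      ((iv.2 : ℕ) = 0 ∧ (jw.2 : ℕ) = 0 ∧ 1 ≤ (iv.1 : ℕ) ∧ (jw.1 : ℕ) = ((iv.1 : ℕ) - 1) / r)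
  | .inr (.inl iv), .inr (.inr (.inl jm)) => (iv.2 : ℕ) = 0 ∧ iv.1 = jm.1 ∧ (jm.2 : ℕ) = 0
  | .inr (.inl iv), .inr (.inr (.inr (.inl d))) => γ = 0 ∧ (iv.2 : ℕ) = 0 ∧ (iv.1 : ℕ) = (d : ℕ)
  | .inr (.inr (.inl im)), .inr (.inr (.inl jm)) => im.1 = jm.1 ∧ (jm.2 : ℕ) = (im.2 : ℕ) + 1
  | .inr (.inr (.inl im)), .inr (.inr (.inr (.inl d))) =>
      (im.2 : ℕ) + 1 = γ ∧ (im.1 : ℕ) = (d : ℕ)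
  | .inr (.inr (.inr (.inl d))), .inr (.inr (.inr (.inl e))) => (e : ℕ) = (d : ℕ) + 1
  | .inr (.inr (.inr (.inl d))), .inr (.inr (.inr (.inr jw))) =>
      (jw.2 : ℕ) = γ ∧ heapDepth r (jw.1 : ℕ) = (d : ℕ)
  | .inr (.inr (.inr (.inr iv))), .inr (.inr (.inr (.inr jw))) =>
      (iv.1 = jw.1 ∧ (jw.2 : ℕ) = (iv.2 : ℕ) + 1) ∨
      ((iv.2 : ℕ) = 0 ∧ (jw.2 : ℕ) = 0 ∧ 1 ≤ (iv.1 : ℕ) ∧ (jw.1 : ℕ) = ((iv.1 : ℕ) - 1) / r)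
  | _, _ => False

/-- The graph `W_a^{γ,*}`. -/
def WSG (γ r a : ℕ) : SimpleGraph (WSVert γ r a) := SimpleGraph.fromRel (WSbase γ r a)

/-- `Vnum γ r a = V_{γ,r}(a) = a + 2(γ+1)ω_r(a) + (γ+1)ω_r(ω_r(a))`,
the number of vertices of `W_a^{γ,*}`. -/
def Vnum (γ r a : ℕ) : ℕ := a + 2 * (γ + 1) * ωr r a + (γ + 1) * ωr r (ωr r a)

/-- `s` is (the vertex set of) an induced copy of `H` in `G`. -/
def IsInducedCopy {V W : Type} (H : SimpleGraph W) (G : SimpleGraph V) (s : Set V) : Prop :=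
  Nonempty (H ≃g G.induce s)

/-! ### The quantities `k_γ` and `f` -/

/-- `kcoef α γ = k_γ = 2(1 − α(γ+2)/(γ+1))`. -/
def kcoef (α : ℝ) (γ : ℕ) : ℝ := 2 * (1 - α * ((γ : ℝ) + 2) / ((γ : ℝ) + 1))

/-- `ff α x = f(x) = x^α · ln x`. -/
def ff (α x : ℝ) : ℝ := x ^ α * Real.log x

/-! ### The language `L_m` and EMSO satisfaction -/

/-- Relation symbols of the language `L_m`: `m` unary symbols and one binary symbol. -/
def LRel (m : ℕ) : ℕ → Type
  | 1 => Fin m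
  | 2 => Unit
  | _ => Empty

/-- The first-order language `L_m`: one binary relation symbol, `m` unary relation symbols
and no function symbols. -/
def Lang (m : ℕ) : Language where
  Functions := fun _ => Empty
  Relations := LRel m

/-- The `L_m`-structure on `Fin n` whose binary relation is adjacency in the graph `G` and
whose `i`-th unary relation is membership in `S i`. -/
def structOf {n m : ℕ} (G : SimpleGraph (Fin n)) (S : Fin m → Set (Fin n)) :
    (Lang m).Structure (Fin n) where
  funMap := fun f _ => Empty.elim f
  RelMap := fun {k} r v =>
    match k, r, v with
    | 1, i, v => v 0 ∈ S i
    | 2, _, v => G.Adj (v 0) (v 1)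
    | 0, r, _ => Empty.elim r
    | (_ + 3), r, _ => Empty.elim r

/-- `G` EMSO-satisfies the `L_m`-sentence `φ`: there are sets `S 0, …, S (m-1)` of vertices
such that the structure on `Fin n` given by adjacency in `G` and membership in the `S i`
satisfies `φ`. -/
def EMSOSat {n m : ℕ} (G : SimpleGraph (Fin n)) (φ : (Lang m).Sentence) : Prop :=
  ∃ S : Fin m → Set (Fin n),
    @FirstOrder.Language.Sentence.Realize (Lang m) (Fin n) (structOf G S) φ

namespace S9

open Finset

abbrev ET (n : ℕ) := {q : Fin n × Fin n // q.1 < q.2}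

def w (p : ℝ) (b : Bool) : ℝ := if b then p else 1 - p

def mu (n : ℕ) (p : ℝ) (f : ET n → Bool) : ℝ := ∏ e, w p (f e)

def gOf {n : ℕ} (f : ET n → Bool) : SimpleGraph (Fin n) where
  Adj a b := (∃ h : a < b, f ⟨(a, b), h⟩) ∨ (∃ h : b < a, f ⟨(b, a), h⟩)
  symm := by constructor; intro a b h; tauto
  loopless := by constructor; rintro a (⟨h, _⟩ | ⟨h, _⟩) <;> exact absurd h (lt_irrefl a)

lemma adj_gOf {n : ℕ} (f : ET n → Bool) (a b : Fin n) :
    (gOf f).Adj a b ↔ (∃ h : a < b, f ⟨(a, b), h⟩) ∨ (∃ h : b < a, f ⟨(b, a), h⟩) := Iff.rfl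

open scoped Classical in
def gEquiv (n : ℕ) : (ET n → Bool) ≃ SimpleGraph (Fin n) where
  toFun := gOf
  invFun G e := decide (G.Adj e.1.1 e.1.2)
  left_inv f := by
    funext e
    obtain ⟨⟨a, b⟩, hab⟩ := e
    simp only [adj_gOf]
    rcases h : f ⟨(a, b), hab⟩ with _ | _
    · simp only [decide_eq_false_iff_not]
      rintro (⟨h1, h2⟩ | ⟨h1, h2⟩)
      · simp [h] at h2
      · exact absurd (h1.trans hab) (lt_irrefl _)
    · simp only [decide_eq_true_eq]
      exact Or.inl ⟨hab, h⟩
  right_inv G := by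
    ext a b
    simp only [adj_gOf, decide_eq_true_eq]
    constructor
    · rintro (⟨h1, h2⟩ | ⟨h1, h2⟩)
      · exact h2
      · exact h2.symm
    · intro h
      rcases lt_trichotomy a b with hl | hl | hl
      · exact Or.inl ⟨hl, h⟩
      · exact absurd hl (G.ne_of_adj h)
      · exact Or.inr ⟨hl, h.symm⟩

lemma card_ET (n : ℕ) : Fintype.card (ET n) = n * (n - 1) / 2 := by
  have e : ET n ≃ Σ b : Fin n, Fin b.1 := by
    refine ⟨fun q => ⟨q.1.2, ⟨q.1.1.1, q.2⟩⟩, fun s => ⟨(⟨s.2.1, lt_trans s.2.2 s.1.2⟩, s.1), s.2.2⟩, ?_, ?_⟩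
    · rintro ⟨⟨a, b⟩, h⟩; rfl
    · rintro ⟨b, j⟩; rfl
  rw [Fintype.card_congr e, Fintype.card_sigma]
  simp only [Fintype.card_fin]
  have h : ∑ x : Fin n, (x : ℕ) = ∑ i ∈ Finset.range n, i := Fin.sum_univ_eq_sum_range (fun i => i) n
  have := Finset.sum_range_id_mul_two n
  omega

lemma edgeCt_gOf {n : ℕ} (f : ET n → Bool) :
    edgeCt (gOf f) = (univ.filter fun e : ET n => f e = true).card := by
  classical
  have key : Function.Bijective
      (fun e : {e : ET n // f e = true} => (⟨s(e.1.1.1, e.1.1.2), by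
        rw [SimpleGraph.mem_edgeSet, adj_gOf]
        exact Or.inl ⟨e.1.2, e.2⟩⟩ : (gOf f).edgeSet)) := by
    constructor
    · rintro ⟨⟨⟨a, b⟩, hab⟩, hf⟩ ⟨⟨⟨c, d⟩, hcd⟩, hg⟩ h
      simp only [Subtype.mk.injEq, Sym2.eq, Sym2.rel_iff', Prod.mk.injEq, Prod.swap_prod_mk] at h
      rcases h with ⟨h1, h2⟩ | ⟨h1, h2⟩
      · subst h1; subst h2; rfl
      · subst h1; subst h2; exact absurd (hab.trans hcd) (lt_irrefl _)
    · rintro ⟨e, he⟩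
      induction e with
      | _ a b =>
        rw [SimpleGraph.mem_edgeSet, adj_gOf] at he
        rcases he with ⟨h1, h2⟩ | ⟨h1, h2⟩
        · exact ⟨⟨⟨(a, b), h1⟩, h2⟩, rfl⟩
        · exact ⟨⟨⟨(b, a), h1⟩, h2⟩, by simp [Sym2.eq_swap]⟩
  rw [edgeCt, Nat.card_eq_fintype_card, ← Fintype.card_of_bijective key,
    Fintype.card_subtype]

lemma mu_eq {n : ℕ} (p : ℝ) (f : ET n → Bool) :
    mu n p f = p ^ (univ.filter fun e : ET n => f e = true).card *
      (1 - p) ^ (n * (n - 1) / 2 - (univ.filter fun e : ET n => f e = true).card) := by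
  classical
  rw [mu, ← Finset.prod_filter_mul_prod_filter_not univ (fun e => f e = true)]
  have h1 : ∀ e ∈ univ.filter fun e : ET n => f e = true, w p (f e) = p := by
    intro e he; simp only [mem_filter] at he; simp [w, he.2]
  have h2 : ∀ e ∈ univ.filter fun e : ET n => ¬ f e = true, w p (f e) = 1 - p := by
    intro e he; simp only [mem_filter] at he
    simp [w, Bool.eq_false_iff.2 (fun h => he.2 h)]
  rw [Finset.prod_congr rfl h1, Finset.prod_congr rfl h2, Finset.prod_const, Finset.prod_const]
  congr 1
  rw [Finset.filter_not, Finset.card_sdiff_of_subset (Finset.filter_subset _ _), Finset.card_univ, card_ET]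

open scoped Classical in
lemma prob_eq (n : ℕ) (p : ℝ) (Q : SimpleGraph (Fin n) → Prop) :
    prob n p Q = ∑ f : ET n → Bool, (if Q (gOf f) then (1:ℝ) else 0) * mu n p f := by
  rw [prob]
  refine (Fintype.sum_equiv (gEquiv n) _ _ ?_).symm
  intro f
  rw [mu_eq, ← edgeCt_gOf]
  simp only [gEquiv, Equiv.coe_fn_mk]
  split_ifs <;> simp_all

lemma sum_mu (n : ℕ) (p : ℝ) : ∑ f : ET n → Bool, mu n p f = 1 := by
  classical
  have := Finset.prod_univ_sum (fun _ : ET n => (univ : Finset Bool)) (fun _ b => w p b)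
  rw [Fintype.piFinset_univ] at this
  rw [show (fun f : ET n → Bool => mu n p f) = fun f => ∏ e, w p (f e) from rfl] at *
  calc ∑ f : ET n → Bool, ∏ e, w p (f e) = ∏ _e : ET n, ∑ b : Bool, w p b := this.symm
    _ = 1 := by simp [w]

lemma mu_nonneg {n : ℕ} {p : ℝ} (h0 : 0 ≤ p) (h1 : p ≤ 1) (f : ET n → Bool) :
    0 ≤ mu n p f := by
  refine Finset.prod_nonneg fun e _ => ?_
  rcases f e <;> simp [w] <;> linarith

/-! ### Bernoulli block lemmas -/

lemma sum_pi_bool {ι : Type} [Fintype ι] [DecidableEq ι] (p : ℝ) :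
    ∑ g : ι → Bool, ∏ i, w p (g i) = 1 := by
  have := Finset.prod_univ_sum (fun _ : ι => (univ : Finset Bool)) (fun _ b => w p b)
  rw [Fintype.piFinset_univ] at this
  rw [← this]
  simp [w]

lemma sum_pi_bool_ex {ι : Type} [Fintype ι] [DecidableEq ι] (p : ℝ) :
    ∑ g : ι → Bool, (if ∃ i, g i = true then (1:ℝ) else 0) * ∏ i, w p (g i)
      = 1 - (1 - p) ^ Fintype.card ι := by
  classical
  have key : ∀ g : ι → Bool,
      (if ∃ i, g i = true then (1:ℝ) else 0) * ∏ i, w p (g i)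
        = ∏ i, w p (g i) - (if g = fun _ => false then (1:ℝ) else 0) * ∏ i, w p (g i) := by
    intro g
    by_cases h : ∃ i, g i = true
    · have : ¬ g = fun _ => false := by
        rintro rfl; simp at h
      simp [h, this]
    · have : g = fun _ => false := by
        funext i
        exact Bool.eq_false_iff.2 fun hi => h ⟨i, hi⟩
      simp [h, this]
  rw [Finset.sum_congr rfl fun g _ => key g, Finset.sum_sub_distrib, sum_pi_bool]
  congr 1
  rw [Finset.sum_eq_single (fun _ => false)]
  · simp [w]
  · intro g _ hg; simp [hg]
  · simp

/-! ### Classification of edges relative to X -/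

variable {n : ℕ}

def cls (X : Finset (Fin n)) (e : ET n) : Option (Fin n) :=
  if e.1.1 ∈ X then (if e.1.2 ∈ X then none else some e.1.2)
  else (if e.1.2 ∈ X then some e.1.1 else none)

lemma cls_eq_some_iff {X : Finset (Fin n)} {e : ET n} {v : Fin n} :
    cls X e = some v ↔
      (e.1.1 ∈ X ∧ e.1.2 ∉ X ∧ e.1.2 = v) ∨ (e.1.1 ∉ X ∧ e.1.2 ∈ X ∧ e.1.1 = v) := by
  unfold cls
  split_ifs with h1 h2 <;> simp_all <;> tauto

/-- For `v ∉ X`, having a neighbour of `v` in `X` is the same as some edge of the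
fiber over `v` being present. -/
lemma adjX {X : Finset (Fin n)} {v : Fin n} (hv : v ∉ X) (f : ET n → Bool) :
    (∃ u ∈ X, (gOf f).Adj v u) ↔ ∃ i : {e : ET n // cls X e = some v}, f i.1 = true := by
  constructor
  · rintro ⟨u, hu, hadj⟩
    rw [adj_gOf] at hadj
    rcases hadj with ⟨h1, h2⟩ | ⟨h1, h2⟩
    · exact ⟨⟨⟨(v, u), h1⟩, cls_eq_some_iff.2 (Or.inr ⟨hv, hu, rfl⟩)⟩, h2⟩
    · exact ⟨⟨⟨(u, v), h1⟩, cls_eq_some_iff.2 (Or.inl ⟨hu, hv, rfl⟩)⟩, h2⟩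
  · rintro ⟨⟨⟨⟨a, b⟩, hab⟩, hcls⟩, hf⟩
    rcases cls_eq_some_iff.1 hcls with ⟨h1, h2, h3⟩ | ⟨h1, h2, h3⟩ <;> dsimp at h1 h2 h3
    · subst h3
      exact ⟨a, h1, Or.inr ⟨hab, hf⟩⟩
    · subst h3
      exact ⟨b, h2, Or.inl ⟨hab, hf⟩⟩

lemma card_fiber {X : Finset (Fin n)} {v : Fin n} (hv : v ∉ X) :
    Fintype.card {e : ET n // cls X e = some v} = X.card := by
  classical
  rw [Fintype.card_subtype]
  refine Finset.card_bij' (fun e _ => if e.1.1 = v then e.1.2 else e.1.1)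
    (fun u hu => if h : u < v then ⟨(u, v), h⟩ else
      ⟨(v, u), lt_of_le_of_ne (not_lt.1 h) (fun he => hv (by rw [show v = u from he]; exact hu))⟩) ?_ ?_ ?_ ?_
  · intro e he
    rw [Finset.mem_filter] at he
    rcases cls_eq_some_iff.1 he.2 with ⟨h1, h2, h3⟩ | ⟨h1, h2, h3⟩
    · have hne : e.1.1 ≠ v := fun he' => hv (he' ▸ h1)
      simpa [hne] using h1
    · simpa [h3] using h2
  · intro u hu
    rw [Finset.mem_filter]
    refine ⟨Finset.mem_univ _, ?_⟩
    split_ifs with h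
    · exact cls_eq_some_iff.2 (Or.inl ⟨hu, hv, rfl⟩)
    · exact cls_eq_some_iff.2 (Or.inr ⟨hv, hu, rfl⟩)
  · rintro ⟨⟨a, b⟩, hab⟩ he
    rw [Finset.mem_filter] at he
    rcases cls_eq_some_iff.1 he.2 with ⟨h1, h2, h3⟩ | ⟨h1, h2, h3⟩ <;> dsimp only at h1 h2 h3 ⊢
    · subst h3
      have hne : a ≠ b := ne_of_lt hab
      have hne' : ¬ a = b := hne
      simp only [hne', if_false, hab, dif_pos]
    · subst h3
      simp [asymm hab]
  · intro u hu
    by_cases h : u < v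
    · rw [dif_pos h]
      simp [ne_of_lt h]
    · rw [dif_neg h]
      simp


/-! ### Probability that `X` is bad -/

def Bad (X : Finset (Fin n)) (G : SimpleGraph (Fin n)) : Prop :=
  ∀ v, v ∉ X → ∃ u ∈ X, G.Adj v u

open scoped Classical in
def Pbad (n : ℕ) (p : ℝ) (X : Finset (Fin n)) : ℝ :=
  ∑ f : ET n → Bool, (if Bad X (gOf f) then (1:ℝ) else 0) * mu n p f

open scoped Classical in
def Hfun (X : Finset (Fin n)) : (k : Option (Fin n)) → ({e : ET n // cls X e = k} → Bool) → ℝ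
  | none => fun _ => 1
  | some v => fun g => if v ∈ X then 1 else if ∃ i, g i = true then 1 else 0

lemma Hfun_none (X : Finset (Fin n)) (g : {e : ET n // cls X e = none} → Bool) :
    Hfun X none g = 1 := rfl

open scoped Classical in
lemma Hfun_some (X : Finset (Fin n)) (v : Fin n) (g : {e : ET n // cls X e = some v} → Bool) :
    Hfun X (some v) g = if v ∈ X then 1 else if ∃ i, g i = true then 1 else 0 := rfl

lemma prod_ite_mem (X : Finset (Fin n)) (c : ℝ) :
    (∏ v : Fin n, if v ∈ X then (1:ℝ) else c) = c ^ (n - X.card) := by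
  classical
  rw [← Finset.prod_mul_prod_compl X]
  rw [Finset.prod_congr rfl (fun v hv => if_pos hv), Finset.prod_const_one, one_mul]
  rw [Finset.prod_congr rfl (fun v hv => if_neg (Finset.mem_compl.1 hv)), Finset.prod_const,
    Finset.card_compl, Fintype.card_fin]

set_option maxHeartbeats 1000000 in
open scoped Classical in
lemma Pbad_eq (p : ℝ) (X : Finset (Fin n)) :
    Pbad n p X = (1 - (1 - p) ^ X.card) ^ (n - X.card) := by
  classical
  -- Step A: rewrite the summand
  have stepA : ∀ f : ET n → Bool,
      (if Bad X (gOf f) then (1:ℝ) else 0) * mu n p f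
        = ∏ k : Option (Fin n), (Hfun X k (fun i => f i.1) *
            ∏ i : {e : ET n // cls X e = k}, w p (f i.1)) := by
    intro f
    rw [Finset.prod_mul_distrib]
    congr 1
    · -- indicator
      rw [Fintype.prod_option]
      rw [Hfun_none, one_mul]
      by_cases hB : Bad X (gOf f)
      · rw [if_pos hB]
        refine (Finset.prod_eq_one fun v _ => ?_).symm
        rw [Hfun_some]
        by_cases hv : v ∈ X
        · rw [if_pos hv]
        · rw [if_neg hv, if_pos ((adjX hv f).1 (hB v hv))]
      · rw [if_neg hB]
        unfold Bad at hB
        push_neg at hB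
        obtain ⟨v, hv, hbad⟩ := hB
        refine (Finset.prod_eq_zero (Finset.mem_univ v) ?_).symm
        rw [Hfun_some, if_neg hv, if_neg]
        intro hex
        obtain ⟨u, hu, hadj⟩ := (adjX hv f).2 hex
        exact (hbad u hu) hadj
    · -- mu
      rw [mu, ← Equiv.prod_comp (Equiv.sigmaFiberEquiv (cls X)) (fun e => w p (f e)),
        ← Finset.univ_sigma_univ, Finset.prod_sigma]
      rfl
  rw [Pbad, Finset.sum_congr rfl fun f _ => stepA f]
  -- Step B: reindex by blocks
  let Φ : (ET n → Bool) ≃ (∀ k : Option (Fin n), {e : ET n // cls X e = k} → Bool) :=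
    ((Equiv.sigmaFiberEquiv (cls X)).arrowCongr (Equiv.refl Bool)).symm.trans
      (Equiv.piCurry fun _ _ => Bool)
  have stepB : (∑ f : ET n → Bool, ∏ k : Option (Fin n), (Hfun X k (fun i => f i.1) *
        ∏ i : {e : ET n // cls X e = k}, w p (f i.1)))
      = ∑ F : (∀ k : Option (Fin n), {e : ET n // cls X e = k} → Bool),
          ∏ k : Option (Fin n), (Hfun X k (F k) *
            ∏ i : {e : ET n // cls X e = k}, w p (F k i)) :=
    Fintype.sum_equiv Φ _ _ (fun f => rfl)
  rw [stepB]
  -- Step C: swap sum and product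
  have stepC := Finset.prod_univ_sum
    (fun k : Option (Fin n) => (univ : Finset ({e : ET n // cls X e = k} → Bool)))
    (fun k g => Hfun X k g * ∏ i : {e : ET n // cls X e = k}, w p (g i))
  rw [Fintype.piFinset_univ] at stepC
  rw [← stepC]
  -- Step D: compute each factor
  rw [Fintype.prod_option]
  have hnone : ∑ g : {e : ET n // cls X e = none} → Bool,
      Hfun X none g * ∏ i, w p (g i) = 1 := by
    simp only [Hfun_none, one_mul]
    exact sum_pi_bool p
  rw [hnone, one_mul]
  have hsome : ∀ v : Fin n, (∑ g : {e : ET n // cls X e = some v} → Bool,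
      Hfun X (some v) g * ∏ i, w p (g i))
        = if v ∈ X then 1 else 1 - (1 - p) ^ X.card := by
    intro v
    by_cases hv : v ∈ X
    · rw [if_pos hv]
      simp only [Hfun_some, if_pos hv, one_mul]
      exact sum_pi_bool p
    · rw [if_neg hv]
      simp only [Hfun_some, if_neg hv]
      rw [sum_pi_bool_ex, card_fiber hv]
  rw [Finset.prod_congr rfl fun v _ => hsome v]
  exact prod_ite_mem X _



/-! ### Union bound and complement -/

lemma prob_congr (p : ℝ) (Q Q' : SimpleGraph (Fin n) → Prop) (h : ∀ G, Q G ↔ Q' G) :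
    prob n p Q = prob n p Q' := by
  classical
  unfold prob
  exact Finset.sum_congr rfl fun G _ => by rw [if_congr (h G) rfl rfl]

lemma prob_true (p : ℝ) : prob n p (fun _ => True) = 1 := by
  rw [prob_eq]
  simpa using sum_mu n p

lemma prob_add_compl (p : ℝ) (Q : SimpleGraph (Fin n) → Prop) :
    prob n p Q + prob n p (fun G => ¬ Q G) = 1 := by
  classical
  rw [← prob_true (n := n) p]
  unfold prob
  rw [← Finset.sum_add_distrib]
  refine Finset.sum_congr rfl fun G _ => ?_
  by_cases h : Q G <;> simp [h]

lemma prob_nonneg (p : ℝ) (h0 : 0 ≤ p) (h1 : p ≤ 1) (Q : SimpleGraph (Fin n) → Prop) :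
    0 ≤ prob n p Q := by
  classical
  rw [prob_eq]
  refine Finset.sum_nonneg fun f _ => mul_nonneg ?_ (mu_nonneg h0 h1 f)
  split_ifs <;> norm_num

set_option maxHeartbeats 1000000 in
lemma union_bound (p : ℝ) (h0 : 0 ≤ p) (h1 : p ≤ 1) (m : ℕ) :
    prob n p (fun G => ∃ X : Finset (Fin n), X.card = m ∧ Bad X G)
      ≤ (n.choose m : ℝ) * (1 - (1 - p) ^ m) ^ (n - m) := by
  classical
  rw [prob_eq]
  have hle : ∀ f : ET n → Bool,
      (@ite ℝ (∃ X : Finset (Fin n), X.card = m ∧ Bad X (gOf f)) (Classical.propDecidable _) (1:ℝ) 0) * mu n p f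
        ≤ ∑ X ∈ Finset.powersetCard m (univ : Finset (Fin n)),
            (@ite ℝ (Bad X (gOf f)) (Classical.propDecidable _) (1:ℝ) 0) * mu n p f := by
    intro f
    have hterm : ∀ X ∈ Finset.powersetCard m (univ : Finset (Fin n)),
        (0:ℝ) ≤ (@ite ℝ (Bad X (gOf f)) (Classical.propDecidable _) (1:ℝ) 0) * mu n p f := by
      intro X _
      refine mul_nonneg ?_ (mu_nonneg h0 h1 f)
      split_ifs <;> norm_num
    by_cases hex : ∃ X : Finset (Fin n), X.card = m ∧ Bad X (gOf f)
    · obtain ⟨X₀, hc, hB⟩ := hex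
      rw [if_pos (⟨X₀, hc, hB⟩ : ∃ X : Finset (Fin n), X.card = m ∧ Bad X (gOf f)), one_mul]
      have hmem : X₀ ∈ Finset.powersetCard m (univ : Finset (Fin n)) :=
        Finset.mem_powersetCard_univ.2 hc
      calc mu n p f = (@ite ℝ (Bad X₀ (gOf f)) (Classical.propDecidable _) (1:ℝ) 0) * mu n p f := by rw [if_pos hB, one_mul]
        _ ≤ _ := Finset.single_le_sum hterm hmem
    · rw [if_neg hex, zero_mul]
      exact Finset.sum_nonneg hterm
  refine le_trans (Finset.sum_le_sum fun f (_ : f ∈ univ) => hle f) ?_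
  rw [Finset.sum_comm]
  have : ∀ X ∈ Finset.powersetCard m (univ : Finset (Fin n)),
      (∑ f : ET n → Bool, (@ite ℝ (Bad X (gOf f)) (Classical.propDecidable _) (1:ℝ) 0) * mu n p f)
        = (1 - (1 - p) ^ m) ^ (n - m) := by
    intro X hX
    have := Pbad_eq (n := n) p X
    rw [Pbad] at this
    rw [this, Finset.mem_powersetCard_univ.1 hX]
  rw [Finset.sum_congr rfl this, Finset.sum_const, Finset.card_powersetCard,
    Finset.card_univ, Fintype.card_fin, nsmul_eq_mul]

lemma prob_goal_ge (p : ℝ) (h0 : 0 ≤ p) (h1 : p ≤ 1) (m : ℕ) :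
    1 - (n.choose m : ℝ) * (1 - (1 - p) ^ m) ^ (n - m)
      ≤ prob n p (fun G => ∀ X : Finset (Fin n), X.card = m →
          ∃ v, v ∉ X ∧ ∀ u ∈ X, ¬ G.Adj v u) := by
  classical
  have hcompl : prob n p (fun G => ¬ (∀ X : Finset (Fin n), X.card = m →
        ∃ v, v ∉ X ∧ ∀ u ∈ X, ¬ G.Adj v u))
      = prob n p (fun G => ∃ X : Finset (Fin n), X.card = m ∧ Bad X G) := by
    refine prob_congr p _ _ fun G => ?_
    rw [not_forall]
    refine exists_congr fun X => ?_
    rw [Classical.not_imp]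
    refine and_congr_right fun _ => ?_
    unfold Bad
    push_neg
    simp only [not_not]
  have h1' := prob_add_compl (n := n) p (fun G => ∀ X : Finset (Fin n), X.card = m →
    ∃ v, v ∉ X ∧ ∀ u ∈ X, ¬ G.Adj v u)
  have h2' := union_bound (n := n) p h0 h1 m
  rw [hcompl] at h1'
  linarith

/-! ### Analytic lemmas -/

open Real

lemma one_sub_le_exp_neg (x : ℝ) : 1 - x ≤ Real.exp (-x) := by
  have := Real.add_one_le_exp (-x); linarith

lemma exp_neg_le_one_sub {p : ℝ} (h1 : p < 1) :
    Real.exp (-(p / (1 - p))) ≤ 1 - p := by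
  have hp : 0 < 1 - p := by linarith
  have h := Real.add_one_le_exp (p / (1 - p))
  have h2 : (1:ℝ) / (1 - p) ≤ Real.exp (p / (1 - p)) := by
    have : p / (1 - p) + 1 = 1 / (1 - p) := by field_simp; ring
    linarith
  rw [Real.exp_neg]
  have h3 : (Real.exp (p / (1 - p)))⁻¹ ≤ ((1:ℝ) / (1 - p))⁻¹ :=
    inv_anti₀ (by positivity) h2
  simpa using h3

lemma tendsto_T (α κ c : ℝ) (hα0 : 0 < α) (hκ0 : 0 < κ) (hκ : κ < 1 - α) (hc : 0 < c) :
    Filter.Tendsto (fun x : ℝ => κ * x ^ α * (Real.log x) ^ 2 - c * x ^ (1 - κ))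
      Filter.atTop Filter.atBot := by
  have hs : 0 < 1 - κ - α := by linarith
  have h := isLittleO_log_rpow_rpow_atTop (2:ℝ) hs
  have hb := h.bound (show (0:ℝ) < c / (2 * κ) by positivity)
  have hmain : ∀ᶠ x : ℝ in Filter.atTop,
      κ * x ^ α * (Real.log x) ^ 2 - c * x ^ (1 - κ) ≤ -(c / 2) * x ^ (1 - κ) := by
    filter_upwards [hb, Filter.eventually_ge_atTop (1:ℝ)] with x hx hx1
    have hx0 : (0:ℝ) < x := by linarith
    have hlog : 0 ≤ Real.log x := Real.log_nonneg hx1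
    have h2 : Real.log x ^ (2:ℝ) = (Real.log x) ^ 2 := by
      rw [show (2:ℝ) = ((2:ℕ):ℝ) by norm_num, Real.rpow_natCast]
    rw [Real.norm_eq_abs, Real.norm_eq_abs, h2, abs_of_nonneg (by positivity),
      abs_of_nonneg (Real.rpow_nonneg hx0.le _)] at hx
    have h8 : κ * x ^ α * (Real.log x) ^ 2 ≤ (c / 2) * x ^ (1 - κ) := by
      calc κ * x ^ α * (Real.log x) ^ 2
          ≤ κ * x ^ α * (c / (2 * κ) * x ^ (1 - κ - α)) := by
            apply mul_le_mul_of_nonneg_left hx (by positivity)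
        _ = (c / 2) * (x ^ α * x ^ (1 - κ - α)) := by field_simp
        _ = (c / 2) * x ^ (1 - κ) := by rw [← Real.rpow_add hx0]; ring_nf
    linarith
  refine Filter.tendsto_atBot_mono' Filter.atTop hmain ?_
  have h6 : Filter.Tendsto (fun x : ℝ => (c / 2) * x ^ (1 - κ)) Filter.atTop Filter.atTop :=
    (tendsto_rpow_atTop (by linarith)).const_mul_atTop (by positivity)
  have h7 := Filter.tendsto_neg_atTop_atBot.comp h6
  exact h7.congr fun x => (neg_mul _ _).symm

lemma tendsto_small (s : ℝ) (hs : 0 < s) :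
    Filter.Tendsto (fun x : ℝ => x ^ (-s) * Real.log x) Filter.atTop (nhds 0) := by
  have h := (isLittleO_log_rpow_atTop hs).tendsto_div_nhds_zero
  refine h.congr' ?_
  filter_upwards [Filter.eventually_gt_atTop (0:ℝ)] with x hx
  rw [Real.rpow_neg hx.le, div_eq_mul_inv, mul_comm]

end S9

/-- Let α ∈ (0,1) and 0 < κ < 1 − α. Then a.a.s., for every set X of exactly
⌊κ·n^α·ln n⌋ vertices of G(n, n^{−α}), there is a vertex outside X having no neighbor
in X. -/
theorem stmt9 (α : ℝ) (hα0 : 0 < α) (hα1 : α < 1) (κ : ℝ) (hκ0 : 0 < κ) (hκ : κ < 1 - α) :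
    Tendsto (fun n : ℕ =>
        prob n ((n : ℝ) ^ (-α)) (fun G =>
          ∀ X : Finset (Fin n), X.card = ⌊κ * (n : ℝ) ^ α * Real.log n⌋₊ →
            ∃ v, v ∉ X ∧ ∀ u ∈ X, ¬ G.Adj v u))
      atTop (nhds 1) := by
  classical
  set m : ℕ → ℕ := fun n => ⌊κ * (n : ℝ) ^ α * Real.log n⌋₊ with hm
  set p : ℕ → ℝ := fun n => (n : ℝ) ^ (-α) with hp
  set B : ℕ → ℝ := fun n =>
    (n.choose (m n) : ℝ) * (1 - (1 - p n) ^ (m n)) ^ (n - m n) with hB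
  have hp0 : ∀ n : ℕ, 0 ≤ p n := fun n => Real.rpow_nonneg (Nat.cast_nonneg n) _
  have hp1 : ∀ n : ℕ, p n ≤ 1 := by
    intro n
    rcases Nat.eq_zero_or_pos n with h | h
    · rw [hp]; simp only [h, Nat.cast_zero]
      rw [Real.zero_rpow (neg_ne_zero.2 hα0.ne')]
      norm_num
    · exact Real.rpow_le_one_of_one_le_of_nonpos (by exact_mod_cast h) (by linarith)
  have hlow : ∀ n : ℕ, 1 - B n ≤ prob n (p n) (fun G =>
      ∀ X : Finset (Fin n), X.card = m n →
        ∃ v, v ∉ X ∧ ∀ u ∈ X, ¬ G.Adj v u) :=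
    fun n => S9.prob_goal_ge (p n) (hp0 n) (hp1 n) (m n)
  have hup : ∀ n : ℕ, prob n (p n) (fun G =>
      ∀ X : Finset (Fin n), X.card = m n →
        ∃ v, v ∉ X ∧ ∀ u ∈ X, ¬ G.Adj v u) ≤ 1 := by
    intro n
    have h1 := S9.prob_add_compl (n := n) (p n) (fun G =>
      ∀ X : Finset (Fin n), X.card = m n → ∃ v, v ∉ X ∧ ∀ u ∈ X, ¬ G.Adj v u)
    have h2 := S9.prob_nonneg (n := n) (p n) (hp0 n) (hp1 n) (fun G =>
      ¬ ∀ X : Finset (Fin n), X.card = m n → ∃ v, v ∉ X ∧ ∀ u ∈ X, ¬ G.Adj v u)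
    linarith
  -- B → 0
  have hB0 : Tendsto B atTop (nhds 0) := by
    set c : ℝ := (Real.exp 1)⁻¹ / 2 with hc
    have hcpos : 0 < c := by positivity
    have hT : Tendsto (fun n : ℕ =>
        Real.exp (κ * (n:ℝ) ^ α * (Real.log n) ^ 2 - c * (n:ℝ) ^ (1 - κ))) atTop (nhds 0) :=
      Real.tendsto_exp_atBot.comp
        ((S9.tendsto_T α κ c hα0 hκ0 hκ hcpos).comp tendsto_natCast_atTop_atTop)
    have E1 : ∀ᶠ n : ℕ in atTop, 1 ≤ n := eventually_ge_atTop 1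
    have E2 : ∀ᶠ n : ℕ in atTop, p n ≤ 1/2 := by
      have h := (tendsto_rpow_neg_atTop hα0).comp
        (tendsto_natCast_atTop_atTop (R := ℝ))
      exact (h.eventually_lt_const (by norm_num : (0:ℝ) < 1/2)).mono fun n hn => hn.le
    have E3 : ∀ᶠ n : ℕ in atTop, 2 * κ * (p n * Real.log n) ≤ 1 := by
      have h := ((S9.tendsto_small α hα0).comp
        (tendsto_natCast_atTop_atTop (R := ℝ))).const_mul (2 * κ)
      rw [mul_zero] at h
      exact (h.eventually_lt_const (by norm_num : (0:ℝ) < 1)).mono fun n hn => hn.le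
    have E4 : ∀ᶠ n : ℕ in atTop, κ * ((n:ℝ) ^ (-(1 - α)) * Real.log n) ≤ 1/2 := by
      have h := ((S9.tendsto_small (1 - α) (by linarith)).comp
        (tendsto_natCast_atTop_atTop (R := ℝ))).const_mul κ
      rw [mul_zero] at h
      exact (h.eventually_lt_const (by norm_num : (0:ℝ) < 1/2)).mono fun n hn => hn.le
    refine squeeze_zero' ?_ ?_ hT
    · filter_upwards [E1, E2] with n h1 h2
      have hq1 : (1 - p n) ^ (m n) ≤ 1 :=
        pow_le_one₀ (by linarith [hp0 n]) (by linarith [hp0 n])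
      exact mul_nonneg (Nat.cast_nonneg _) (pow_nonneg (by linarith) _)
    · filter_upwards [E1, E2, E3, E4] with n h1 h2 h3 h4
      have hn0 : (0:ℝ) < n := by exact_mod_cast h1
      have hn1 : (1:ℝ) ≤ n := by exact_mod_cast h1
      have hlog : 0 ≤ Real.log n := Real.log_nonneg hn1
      have hmle : (m n : ℝ) ≤ κ * (n:ℝ) ^ α * Real.log n :=
        Nat.floor_le (mul_nonneg (mul_nonneg hκ0.le (Real.rpow_nonneg hn0.le _)) hlog)
      have hplt1 : p n < 1 := lt_of_le_of_lt h2 (by norm_num)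
      -- m ≤ n/2
      have hsplit : (n:ℝ) ^ α = (n:ℝ) ^ (-(1 - α)) * n := by
        rw [← Real.rpow_add_one hn0.ne' (-(1 - α))]
        congr 1
        ring
      have hm2 : (m n : ℝ) ≤ (n:ℝ)/2 := by
        have e1 : κ * (n:ℝ) ^ α * Real.log n
            = (κ * ((n:ℝ) ^ (-(1 - α)) * Real.log n)) * n := by
          rw [hsplit]; ring
        have e2 : (κ * ((n:ℝ) ^ (-(1 - α)) * Real.log n)) * n ≤ (1/2) * n :=
          mul_le_mul_of_nonneg_right h4 hn0.le
        calc (m n : ℝ) ≤ κ * (n:ℝ) ^ α * Real.log n := hmle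
          _ = (κ * ((n:ℝ) ^ (-(1 - α)) * Real.log n)) * n := e1
          _ ≤ (1/2) * n := e2
          _ = (n:ℝ)/2 := by ring
      have hmn : m n ≤ n := by
        have : (m n : ℝ) ≤ (n : ℝ) := hm2.trans (by linarith)
        exact_mod_cast this
      have hcast : ((n - m n : ℕ) : ℝ) = (n:ℝ) - m n := by
        rw [Nat.cast_sub hmn]
      have hnm2 : (n:ℝ)/2 ≤ ((n - m n : ℕ) : ℝ) := by rw [hcast]; linarith
      set q : ℝ := (1 - p n) ^ (m n) with hqdef
      have hq0 : 0 ≤ q := pow_nonneg (by linarith [hp0 n]) _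
      have hq1 : q ≤ 1 := pow_le_one₀ (by linarith [hp0 n]) (by linarith [hp0 n])
      have hqlb : Real.exp (-(κ * Real.log n + 1)) ≤ q := by
        have hstep : Real.exp (-(p n / (1 - p n))) ≤ 1 - p n := S9.exp_neg_le_one_sub hplt1
        have hpw : Real.exp (-(p n / (1 - p n))) ^ (m n) ≤ (1 - p n) ^ (m n) :=
          pow_le_pow_left₀ (Real.exp_nonneg _) hstep _
        rw [← Real.exp_nat_mul] at hpw
        refine le_trans (Real.exp_le_exp.2 ?_) hpw
        -- -(κ log n + 1) ≤ m * -(p/(1-p))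
        have hfrac : p n / (1 - p n) ≤ p n + 2 * p n ^ 2 := by
          rw [div_le_iff₀ (by linarith)]
          nlinarith [hp0 n]
        have hmp : (m n : ℝ) * p n ≤ κ * Real.log n := by
          have h5 : (m n : ℝ) * p n ≤ (κ * (n:ℝ) ^ α * Real.log n) * p n :=
            mul_le_mul_of_nonneg_right hmle (hp0 n)
          have h6 : (κ * (n:ℝ) ^ α * Real.log n) * p n
              = κ * Real.log n * ((n:ℝ) ^ α * (n:ℝ) ^ (-α)) := by rw [hp]; ring
          have h7 : (n:ℝ) ^ α * (n:ℝ) ^ (-α) = 1 := by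
            rw [← Real.rpow_add hn0]; simp
          rw [h6, h7, mul_one] at h5; exact h5
        have hp2m : (m n : ℝ) * (2 * p n ^ 2) ≤ 1 := by
          have e3 : (m n : ℝ) * (2 * p n ^ 2) = 2 * ((m n : ℝ) * p n) * p n := by ring
          have e4 : 2 * ((m n : ℝ) * p n) * p n ≤ 2 * (κ * Real.log n) * p n := by
            apply mul_le_mul_of_nonneg_right _ (hp0 n)
            have := mul_le_mul_of_nonneg_left hmp (by norm_num : (0:ℝ) ≤ 2)
            linarith
          have e5 : 2 * (κ * Real.log n) * p n = 2 * κ * (p n * Real.log n) := by ring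
          rw [e3]
          calc 2 * ((m n : ℝ) * p n) * p n ≤ 2 * (κ * Real.log n) * p n := e4
            _ = 2 * κ * (p n * Real.log n) := e5
            _ ≤ 1 := h3
        have hmono : (m n : ℝ) * (p n / (1 - p n)) ≤ κ * Real.log n + 1 := by
          calc (m n : ℝ) * (p n / (1 - p n))
              ≤ (m n : ℝ) * (p n + 2 * p n ^ 2) :=
                mul_le_mul_of_nonneg_left hfrac (Nat.cast_nonneg _)
            _ = (m n : ℝ) * p n + (m n : ℝ) * (2 * p n ^ 2) := by ring
            _ ≤ κ * Real.log n + 1 := by linarith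
        have : (m n : ℝ) * -(p n / (1 - p n)) = -((m n : ℝ) * (p n / (1 - p n))) := by ring
        rw [this]
        linarith
      -- final chain
      have hchoose : (n.choose (m n) : ℝ) ≤ Real.exp ((m n : ℝ) * Real.log n) := by
        have h8 : (n.choose (m n) : ℝ) ≤ (n:ℝ) ^ (m n) := by
          exact_mod_cast Nat.choose_le_pow n (m n)
        have h9 : (n:ℝ) ^ (m n) = Real.exp ((m n : ℝ) * Real.log n) := by
          conv_lhs => rw [← Real.exp_log hn0]
          rw [← Real.exp_nat_mul]
        exact h8.trans_eq h9
      have hpow : (1 - q) ^ (n - m n)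
          ≤ Real.exp (-(Real.exp (-(κ * Real.log n + 1))) * ((n:ℝ)/2)) := by
        have h10 : (1 - q) ^ (n - m n) ≤ Real.exp (-q) ^ (n - m n) :=
          pow_le_pow_left₀ (by linarith) (S9.one_sub_le_exp_neg q) _
        rw [← Real.exp_nat_mul] at h10
        refine h10.trans (Real.exp_le_exp.2 ?_)
        have hmm := mul_le_mul hqlb hnm2 (by positivity) hq0
        rw [hcast]
        nlinarith [hmm]
      have hfinal1 : (m n : ℝ) * Real.log n ≤ κ * (n:ℝ) ^ α * (Real.log n) ^ 2 := by
        have := mul_le_mul_of_nonneg_right hmle hlog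
        calc (m n : ℝ) * Real.log n ≤ (κ * (n:ℝ) ^ α * Real.log n) * Real.log n := this
          _ = κ * (n:ℝ) ^ α * (Real.log n) ^ 2 := by ring
      have hfinal2 : Real.exp (-(κ * Real.log n + 1)) * ((n:ℝ)/2) = c * (n:ℝ) ^ (1 - κ) := by
        have e6 : Real.exp (-(κ * Real.log n + 1)) = (n:ℝ) ^ (-κ) * (Real.exp 1)⁻¹ := by
          rw [show -(κ * Real.log n + 1) = Real.log n * (-κ) + (-1) by ring, Real.exp_add,
            Real.exp_neg]
          congr 1
          rw [Real.rpow_def_of_pos hn0]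
        have e7 : (n:ℝ) ^ (-κ) * (n:ℝ) = (n:ℝ) ^ (1 - κ) := by
          have := Real.rpow_add hn0 (-κ) 1
          rw [Real.rpow_one] at this
          rw [← this]
          congr 1
          ring
        rw [e6, hc]
        rw [show (n:ℝ) ^ (-κ) * (Real.exp 1)⁻¹ * ((n:ℝ)/2)
          = (Real.exp 1)⁻¹/2 * ((n:ℝ) ^ (-κ) * (n:ℝ)) by ring, e7]
      calc B n = (n.choose (m n) : ℝ) * (1 - q) ^ (n - m n) := rfl
        _ ≤ Real.exp ((m n : ℝ) * Real.log n)
            * Real.exp (-(Real.exp (-(κ * Real.log n + 1))) * ((n:ℝ)/2)) :=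
          mul_le_mul hchoose hpow (pow_nonneg (by linarith) _) (Real.exp_nonneg _)
        _ = Real.exp ((m n : ℝ) * Real.log n
            - Real.exp (-(κ * Real.log n + 1)) * ((n:ℝ)/2)) := by
          rw [← Real.exp_add]; ring_nf
        _ ≤ Real.exp (κ * (n:ℝ) ^ α * (Real.log n) ^ 2 - c * (n:ℝ) ^ (1 - κ)) := by
          apply Real.exp_le_exp.2
          rw [← hfinal2]
          linarith
  have l1 : Tendsto (fun n : ℕ => 1 - B n) atTop (nhds 1) := by
    have h := Tendsto.sub (tendsto_const_nhds : Tendsto (fun _ : ℕ => (1:ℝ)) atTop (nhds 1)) hB0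
    simpa using h
  exact tendsto_of_tendsto_of_tendsto_of_le_of_le l1 tendsto_const_nhds hlow hup
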